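/- Suppose (Z,d) is λ-LLC. Then there exists a function δ₁: ℝ⁺ → ℝ⁺ depending only on λ such that for every ε > 0 and every four-tuple of distinct points (z₁,z₂,z₃,z₄) in Z with [z₁,z₂,z₃,z₄] < δ₁(ε), there exist continua E, F ⊂ Z with z₁,z₃ ∈ E, z₂,z₄ ∈ F, and Δ(E,F) ≥ 1/ε. -/

import Mathlib

/-- A continuum: a compact connected set with more than one point. -/
def IsContinuum {Z : Type*} [MetricSpace Z] (E : Set Z) : Prop :=
  IsCompact E ∧ IsConnected E ∧ E.Nontrivial

/-- The distance between two subsets of a metric space. -/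
noncomputable def setDist {Z : Type*} [MetricSpace Z] (E F : Set Z) : ℝ :=
  sInf (Set.image2 dist E F)

/-- The relative distance `Δ(E,F) = dist(E,F)/min(diam E, diam F)`. -/
noncomputable def relDelta {Z : Type*} [MetricSpace Z] (E F : Set Z) : ℝ :=
  setDist E F / min (Metric.diam E) (Metric.diam F)

/-- The cross-ratio of four points in a metric space. -/
noncomputable def crossRatio {Z : Type*} [MetricSpace Z] (z1 z2 z3 z4 : Z) : ℝ :=
  (dist z1 z3 * dist z2 z4) / (dist z1 z4 * dist z2 z3)

/-- `Z` is `λ`-LLC: (LLC₁) any two points of `B(a,r)` lie in a continuum inside `B(a,λr)`,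
and (LLC₂) any two points outside `B(a,r)` lie in a continuum inside `Z \ B(a, r/λ)`. -/
def IsLLC (Z : Type*) [MetricSpace Z] (lam : ℝ) : Prop :=
  (∀ (a : Z) (r : ℝ), ∀ x ∈ Metric.ball a r, ∀ y ∈ Metric.ball a r,
      ∃ E : Set Z, IsContinuum E ∧ E ⊆ Metric.ball a (lam * r) ∧ x ∈ E ∧ y ∈ E) ∧
  (∀ (a : Z) (r : ℝ), ∀ x ∉ Metric.ball a r, ∀ y ∉ Metric.ball a r,
      ∃ E : Set Z, IsContinuum E ∧ E ⊆ (Metric.ball a (r / lam))ᶜ ∧ x ∈ E ∧ y ∈ E)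

lemma setDist_comm' {Z : Type*} [MetricSpace Z] (E F : Set Z) : setDist E F = setDist F E := by
  unfold setDist
  rw [Set.image2_swap]
  simp [dist_comm]

lemma relDelta_comm' {Z : Type*} [MetricSpace Z] (E F : Set Z) : relDelta E F = relDelta F E := by
  unfold relDelta
  rw [setDist_comm', min_comm]

/-- Arithmetic core: if the cross-ratio is below `1/(C+1)²` and `d₁₃ ≤ d₂₄`, then
`z₂` and `z₄` are at distance at least `C·d₁₃` from `z₁`. -/
lemma getBounds {Z : Type*} [MetricSpace Z] (C : ℝ) (hC : 0 < C) (z1 z2 z3 z4 : Z)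
    (h13 : z1 ≠ z3) (h24 : z2 ≠ z4) (hab : dist z1 z3 ≤ dist z2 z4)
    (hcr : dist z1 z3 * dist z2 z4 < ((C+1)^2)⁻¹ * (dist z1 z4 * dist z2 z3)) :
    C * dist z1 z3 ≤ dist z1 z2 ∧ C * dist z1 z3 ≤ dist z1 z4 := by
  have ha : 0 < dist z1 z3 := dist_pos.2 h13
  have hb : 0 < dist z2 z4 := dist_pos.2 h24
  have hδpos : 0 < ((C+1)^2)⁻¹ := by positivity
  have hδ : ((C+1)^2)⁻¹ * (C+1)^2 = 1 := by field_simp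
  have h23nn : (0:ℝ) ≤ dist z2 z3 := dist_nonneg
  have h14nn : (0:ℝ) ≤ dist z1 z4 := dist_nonneg
  have hCab : C * dist z1 z3 ≤ C * dist z2 z4 := mul_le_mul_of_nonneg_left hab hC.le
  constructor
  · by_contra h
    push_neg at h
    have t1 : dist z2 z3 ≤ dist z1 z2 + dist z1 z3 := by
      have := dist_triangle z2 z1 z3
      rw [dist_comm z2 z1] at this; linarith
    have t2 : dist z1 z4 ≤ dist z1 z2 + dist z2 z4 := dist_triangle z1 z2 z4
    have e1 : dist z1 z2 + dist z2 z4 ≤ (C+1) * dist z2 z4 := by nlinarith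
    have e2 : dist z1 z2 + dist z1 z3 ≤ (C+1) * dist z1 z3 := by linarith
    have e3 : dist z1 z4 * dist z2 z3 ≤ ((C+1) * dist z2 z4) * ((C+1) * dist z1 z3) :=
      mul_le_mul (t2.trans e1) (t1.trans e2) h23nn (by positivity)
    have e4 := mul_le_mul_of_nonneg_left e3 hδpos.le
    have e5 : ((C+1)^2)⁻¹ * (((C+1) * dist z2 z4) * ((C+1) * dist z1 z3))
        = (((C+1)^2)⁻¹ * (C+1)^2) * (dist z1 z3 * dist z2 z4) := by ring
    rw [e5, hδ, one_mul] at e4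
    linarith
  · by_contra h
    push_neg at h
    have t1 : dist z3 z4 ≤ dist z1 z3 + dist z1 z4 := by
      have := dist_triangle z3 z1 z4
      rw [dist_comm z3 z1] at this; linarith
    have t2 : dist z2 z3 ≤ dist z2 z4 + dist z3 z4 := by
      have := dist_triangle z2 z4 z3
      rw [dist_comm z4 z3] at this; linarith
    have e2 : dist z2 z3 ≤ (C+2) * dist z2 z4 := by nlinarith
    have e3 : dist z1 z4 * dist z2 z3 ≤ (C * dist z1 z3) * ((C+2) * dist z2 z4) :=
      mul_le_mul h.le e2 h23nn (by positivity)
    have e4 := mul_le_mul_of_nonneg_left e3 hδpos.le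
    have e5 : ((C+1)^2)⁻¹ * ((C * dist z1 z3) * ((C+2) * dist z2 z4))
        = (C*(C+2) * ((C+1)^2)⁻¹) * (dist z1 z3 * dist z2 z4) := by ring
    have hlt1 : C*(C+2) * ((C+1)^2)⁻¹ < 1 := by nlinarith
    have e6 : (C*(C+2) * ((C+1)^2)⁻¹) * (dist z1 z3 * dist z2 z4)
        < 1 * (dist z1 z3 * dist z2 z4) := mul_lt_mul_of_pos_right hlt1 (mul_pos ha hb)
    rw [e5] at e4
    linarith

/-- Geometric core: if `z₂, z₄` are far from `z₁` relative to `d(z₁,z₃)`, then the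
LLC conditions produce the desired continua. -/
lemma keyLemma (lam : ℝ) (hlam : 1 ≤ lam) (Z : Type*) [MetricSpace Z] (h : IsLLC Z lam)
    (ε : ℝ) (hε : 0 < ε) (z1 z2 z3 z4 : Z) (h13 : z1 ≠ z3)
    (h12 : 2*lam^2*(1+2/ε) * dist z1 z3 ≤ dist z1 z2)
    (h14 : 2*lam^2*(1+2/ε) * dist z1 z3 ≤ dist z1 z4) :
    ∃ E F : Set Z, IsContinuum E ∧ IsContinuum F ∧
      z1 ∈ E ∧ z3 ∈ E ∧ z2 ∈ F ∧ z4 ∈ F ∧ 1 / ε ≤ relDelta E F := by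
  have hlam0 : 0 < lam := lt_of_lt_of_le one_pos hlam
  have ha : 0 < dist z1 z3 := dist_pos.2 h13
  set a := dist z1 z3 with ha_def
  set C := 2*lam^2*(1+2/ε) with hC_def
  have hCpos : 0 < C := by positivity
  obtain ⟨llc1, llc2⟩ := h
  -- inner continuum E
  obtain ⟨E, hEcont, hEsub, hz1E, hz3E⟩ := llc1 z1 (2*a) z1 (by
      simp [Metric.mem_ball]; linarith) z3 (by
      simp [Metric.mem_ball, dist_comm z3 z1]; linarith)
  -- outer continuum F
  obtain ⟨F, hFcont, hFsub, hz2F, hz4F⟩ := llc2 z1 (C*a) z2 (by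
      simp only [Metric.mem_ball, not_lt, dist_comm z2 z1]; linarith) z4 (by
      simp only [Metric.mem_ball, not_lt, dist_comm z4 z1]; linarith)
  refine ⟨E, F, hEcont, hFcont, hz1E, hz3E, hz2F, hz4F, ?_⟩
  -- diameter bounds
  have hEdiam : Metric.diam E ≤ 4*lam*a := by
    calc Metric.diam E ≤ Metric.diam (Metric.ball z1 (lam*(2*a))) :=
          Metric.diam_mono hEsub Metric.isBounded_ball
      _ ≤ 2 * (lam*(2*a)) := Metric.diam_ball (by positivity)
      _ = 4*lam*a := by ring
  have hEdiam0 : 0 < Metric.diam E := by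
    obtain ⟨x, hx, y, hy, hxy⟩ := hEcont.2.2
    have := Metric.dist_le_diam_of_mem (hEcont.1.isBounded) hx hy
    have : 0 < dist x y := dist_pos.2 hxy
    linarith [Metric.dist_le_diam_of_mem (hEcont.1.isBounded) hx hy]
  have hFdiam0 : 0 < Metric.diam F := by
    obtain ⟨x, hx, y, hy, hxy⟩ := hFcont.2.2
    have : 0 < dist x y := dist_pos.2 hxy
    linarith [Metric.dist_le_diam_of_mem (hFcont.1.isBounded) hx hy]
  -- distance bound
  have hdistb : ∀ x ∈ E, ∀ y ∈ F, 4*lam*a/ε ≤ dist x y := by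
    intro x hx y hy
    have hxball : dist x z1 < lam*(2*a) := Metric.mem_ball.1 (hEsub hx)
    have hyball : C*a/lam ≤ dist y z1 := by
      have := hFsub hy
      simp only [Set.mem_compl_iff, Metric.mem_ball, not_lt] at this
      exact this
    have htri : dist y z1 ≤ dist y x + dist x z1 := dist_triangle y x z1
    have hCal : C*a/lam = 2*lam*(1+2/ε)*a := by
      rw [hC_def, div_eq_iff hlam0.ne']; ring
    rw [dist_comm x y]
    have h2 : 2*lam*(1+2/ε)*a - lam*(2*a) = 4*lam*a/ε := by
      field_simp; ring
    linarith [hCal ▸ hyball]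
  have hsd : 4*lam*a/ε ≤ setDist E F := by
    apply le_csInf (Set.Nonempty.image2 hEcont.2.2.nonempty hFcont.2.2.nonempty)
    rintro b ⟨x, hx, y, hy, rfl⟩
    exact hdistb x hx y hy
  have hminpos : 0 < min (Metric.diam E) (Metric.diam F) := lt_min hEdiam0 hFdiam0
  have hminle : min (Metric.diam E) (Metric.diam F) ≤ 4*lam*a := le_trans (min_le_left _ _) hEdiam
  have key : (4*lam*a/ε) / (4*lam*a) ≤ setDist E F / min (Metric.diam E) (Metric.diam F) :=
    div_le_div₀ (le_trans (by positivity) hsd) hsd hminpos hminle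
  have : (4*lam*a/ε) / (4*lam*a) = 1/ε := by
    field_simp
  rw [relDelta]
  linarith [this ▸ key]

/-- If `Z` is `λ`-LLC, there exists `δ₁ : ℝ⁺ → ℝ⁺` depending only on `λ` such that whenever
`[z₁,z₂,z₃,z₄] < δ₁(ε)` for distinct points, there are continua `E ∋ z₁,z₃` and `F ∋ z₂,z₄`
with `Δ(E,F) ≥ 1/ε`. -/
theorem stmt_3 (lam : ℝ) (hlam : 1 ≤ lam) :
    ∃ δ1 : ℝ → ℝ, (∀ ε > (0:ℝ), 0 < δ1 ε) ∧
      ∀ (Z : Type) [MetricSpace Z], IsLLC Z lam →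
        ∀ ε > (0:ℝ), ∀ z1 z2 z3 z4 : Z,
          z1 ≠ z2 → z1 ≠ z3 → z1 ≠ z4 → z2 ≠ z3 → z2 ≠ z4 → z3 ≠ z4 →
          crossRatio z1 z2 z3 z4 < δ1 ε →
          ∃ E F : Set Z, IsContinuum E ∧ IsContinuum F ∧
            z1 ∈ E ∧ z3 ∈ E ∧ z2 ∈ F ∧ z4 ∈ F ∧ 1 / ε ≤ relDelta E F := by
  have hlam0 : 0 < lam := lt_of_lt_of_le one_pos hlam
  refine ⟨fun ε => ((2*lam^2*(1+2/ε)+1)^2)⁻¹, fun ε hε => by positivity, ?_⟩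
  intro Z _ hLLC ε hε z1 z2 z3 z4 h12 h13 h14 h23 h24 h34 hcr
  set C := 2*lam^2*(1+2/ε) with hC_def
  have hCpos : 0 < C := by positivity
  -- unfold the cross-ratio condition
  have hd14 : 0 < dist z1 z4 := dist_pos.2 h14
  have hd23 : 0 < dist z2 z3 := dist_pos.2 h23
  have hcr' : dist z1 z3 * dist z2 z4 < ((C+1)^2)⁻¹ * (dist z1 z4 * dist z2 z3) := by
    rw [crossRatio, div_lt_iff₀ (by positivity)] at hcr
    exact (mul_comm _ _ : ((2*lam^2*(1+2/ε)+1)^2)⁻¹ * _ = _) ▸ hcr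
  rcases le_total (dist z1 z3) (dist z2 z4) with hab | hab
  · obtain ⟨hb12, hb14⟩ := getBounds C hCpos z1 z2 z3 z4 h13 h24 hab hcr'
    exact keyLemma lam hlam Z hLLC ε hε z1 z2 z3 z4 h13 hb12 hb14
  · -- symmetric case: apply with (z2, z1, z4, z3)
    have hcr'' : dist z2 z4 * dist z1 z3 < ((C+1)^2)⁻¹ * (dist z2 z3 * dist z1 z4) := by
      rw [mul_comm (dist z2 z3)]
      linarith [hcr']
    obtain ⟨hb12, hb14⟩ := getBounds C hCpos z2 z1 z4 z3 h24 h13 hab hcr''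
    obtain ⟨E, F, hE, hF, hz2E, hz4E, hz1F, hz3F, hdel⟩ :=
      keyLemma lam hlam Z hLLC ε hε z2 z1 z4 z3 h24 hb12 hb14
    exact ⟨F, E, hF, hE, hz1F, hz3F, hz2E, hz4E, by rwa [relDelta_comm']⟩
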